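/- Let λ, α, c, r > 0 with the condition r/λ > 1/(cα) (net profit condition for the gamma-time risk model with Exp(α) claims). Then the equation c^r x^r (x − (λ/c + α)) + α λ^r = 0 has exactly one real root x₂ strictly greater than λ/c, and moreover λ/c < x₂ < λ/c + α. -/

import Mathlib

/-- Gamma-time risk model with Exp(α) claims: under the net profit condition
`r/λ > 1/(cα)`, the characteristic equation `c^r x^r (x − (λ/c + α)) + αλ^r = 0`
has exactly one real root `x₂ > λ/c`, and it satisfies `λ/c < x₂ < λ/c + α`. -/
theorem stmt12 (lam α c r : ℝ) (hlam : 0 < lam) (hα : 0 < α) (hc : 0 < c)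
    (hr : 0 < r) (hnet : r / lam > 1 / (c * α)) :
    (∃! x : ℝ, lam / c < x ∧ c ^ r * x ^ r * (x - (lam / c + α)) + α * lam ^ r = 0) ∧
    (∀ x : ℝ, lam / c < x →
      c ^ r * x ^ r * (x - (lam / c + α)) + α * lam ^ r = 0 → x < lam / c + α) := by
  set b : ℝ := lam / c with hbdef
  set L : ℝ := b + α with hLdef
  set g : ℝ → ℝ := fun x => c ^ r * x ^ r * (x - L) + α * lam ^ r with hgdef
  have hb : 0 < b := div_pos hlam hc
  have hL : 0 < L := by positivity
  have hcb : c * b = lam := by rw [hbdef]; field_simp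
  -- net profit condition: b < r * α
  have hba : b < r * α := by
    have h := (div_lt_div_iff₀ (mul_pos hc hα) hlam).mp hnet
    rw [hbdef, div_lt_iff₀ hc]
    nlinarith
  set x0 : ℝ := r * L / (r + 1) with hx0def
  have hr1 : (0:ℝ) < r + 1 := by linarith
  have hbx0 : b < x0 := by
    rw [hx0def, lt_div_iff₀ hr1]
    nlinarith [hLdef]
  have hx0L : x0 < L := by
    rw [hx0def, div_lt_iff₀ hr1]
    nlinarith
  have hx0pos : 0 < x0 := lt_trans hb hbx0
  -- derivative of g
  have hderiv : ∀ x : ℝ, 0 < x →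
      HasDerivAt g (c ^ r * x ^ (r - 1) * ((r + 1) * x - r * L)) x := by
    intro x hx
    have h1 : HasDerivAt (fun y : ℝ => y ^ r) (r * x ^ (r - 1)) x :=
      Real.hasDerivAt_rpow_const (Or.inl hx.ne')
    have h2 : HasDerivAt (fun y : ℝ => y - L) 1 x := (hasDerivAt_id x).sub_const L
    have h3 := ((h1.mul h2).const_mul (c ^ r)).add_const (α * lam ^ r)
    have hxr : x ^ r = x ^ (r - 1) * x := by
      rw [← Real.rpow_add_one hx.ne' (r - 1), sub_add_cancel]
    convert h3 using 1
    · rfl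
    · rfl
    · rw [hgdef]; funext y; simp only [Pi.mul_apply]; ring
    · rw [hxr]; ring
  have hcont : ∀ s : Set ℝ, (∀ x ∈ s, 0 < x) → ContinuousOn g s := by
    intro s hs x hx
    exact (hderiv x (hs x hx)).continuousAt.continuousWithinAt
  -- g(b) = 0
  have hgb : g b = 0 := by
    have : c ^ r * b ^ r = lam ^ r := by
      rw [← Real.mul_rpow hc.le hb.le, hcb]
    simp only [hgdef]
    rw [this, hLdef]
    ring
  -- g(L) = α * lam ^ r > 0
  have hgL : g L = α * lam ^ r := by simp [hgdef]
  have hgLpos : 0 < g L := by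
    rw [hgL]; positivity
  -- strictly decreasing on [b, x0]
  have hanti : StrictAntiOn g (Set.Icc b x0) := by
    apply strictAntiOn_of_deriv_neg (convex_Icc _ _)
      (hcont _ (fun x hx => lt_of_lt_of_le hb hx.1))
    intro x hx
    rw [interior_Icc] at hx
    have hxpos : 0 < x := lt_trans hb hx.1
    rw [(hderiv x hxpos).deriv]
    have h1 : 0 < c ^ r * x ^ (r - 1) := by
      have := Real.rpow_pos_of_pos hxpos (r - 1)
      have := Real.rpow_pos_of_pos hc r
      positivity
    have h2 : (r + 1) * x - r * L < 0 := by
      have : x < r * L / (r + 1) := hx.2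
      rw [lt_div_iff₀ hr1] at this
      nlinarith
    exact mul_neg_of_pos_of_neg h1 h2
  -- strictly increasing on [x0, L]
  have hmono : StrictMonoOn g (Set.Icc x0 L) := by
    apply strictMonoOn_of_deriv_pos (convex_Icc _ _)
      (hcont _ (fun x hx => lt_of_lt_of_le hx0pos hx.1))
    intro x hx
    rw [interior_Icc] at hx
    have hxpos : 0 < x := lt_trans hx0pos hx.1
    rw [(hderiv x hxpos).deriv]
    have h1 : 0 < c ^ r * x ^ (r - 1) := by
      have := Real.rpow_pos_of_pos hxpos (r - 1)
      have := Real.rpow_pos_of_pos hc r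
      positivity
    have h2 : 0 < (r + 1) * x - r * L := by
      have : r * L / (r + 1) < x := hx.1
      rw [div_lt_iff₀ hr1] at this
      nlinarith
    exact mul_pos h1 h2
  -- g(x0) < 0
  have hgx0 : g x0 < 0 := by
    have := hanti (Set.left_mem_Icc.mpr hbx0.le) (Set.right_mem_Icc.mpr hbx0.le) hbx0
    rw [hgb] at this
    exact this
  -- every root x with b < x satisfies x < L
  have hrootL : ∀ x : ℝ, b < x → g x = 0 → x < L := by
    intro x hx hgx
    by_contra h
    push_neg at h
    have hxpos : 0 < x := lt_trans hb hx
    have h1 : 0 ≤ c ^ r * x ^ r * (x - L) := by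
      have := Real.rpow_pos_of_pos hxpos r
      have := Real.rpow_pos_of_pos hc r
      have : 0 ≤ x - L := by linarith
      positivity
    have h2 : 0 < α * lam ^ r := by
      have := Real.rpow_pos_of_pos hlam r
      positivity
    have : 0 < g x := by simp only [hgdef]; linarith
    linarith [this, hgx]
  -- every root x with b < x satisfies x0 < x
  have hrootx0 : ∀ x : ℝ, b < x → g x = 0 → x0 < x := by
    intro x hx hgx
    by_contra h
    push_neg at h
    have := hanti (Set.left_mem_Icc.mpr hbx0.le) ⟨hx.le, h⟩ hx
    rw [hgb, hgx] at this
    exact lt_irrefl 0 this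
  -- existence via IVT
  obtain ⟨x, hxmem, hgx⟩ :=
    intermediate_value_Icc hx0L.le (hcont _ (fun x hx => lt_of_lt_of_le hx0pos hx.1))
      (Set.mem_Icc.mpr ⟨hgx0.le, hgLpos.le⟩)
  have hxne0 : x ≠ x0 := by
    intro h
    rw [h] at hgx
    exact hgx0.ne hgx
  have hx0x : x0 < x := lt_of_le_of_ne hxmem.1 (Ne.symm hxne0)
  have hbx : b < x := lt_trans hbx0 hx0x
  constructor
  · refine ⟨x, ⟨hbx, hgx⟩, ?_⟩
    intro y hy
    obtain ⟨hy1, hy2⟩ := hy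
    have hy2' : g y = 0 := hy2
    have hyx0 := hrootx0 y hy1 hy2'
    have hyL := hrootL y hy1 hy2'
    exact hmono.injOn ⟨hyx0.le, hyL.le⟩ hxmem (by rw [hy2', hgx])
  · intro y hy1 hy2
    exact hrootL y hy1 hy2
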